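/- (Orthonormality of Meixner polynomials.) Let μ > 0 and 0 < β < 1. For all integers n, m ≥ 0, ∑_{k=0}^{∞} (1−β)^{2μ} · (2μ)_k · (β^k / k!) · M_n^μ(k; β) · M_m^μ(k; β) = δ_{n,m}, the series converging absolutely. -/

import Mathlib

open Finset

/-- The Pochhammer symbol `(a)ⱼ = a(a+1)⋯(a+j−1)`. -/
noncomputable def poch (a : ℝ) (j : ℕ) : ℝ := (ascPochhammer ℝ j).eval a

/-- The orthonormal Meixner polynomial
`Mₙ^μ(k; β) = √((2μ)ₙ/n!) β^{n/2}
  ∑_{j=0}^{min(n,k)} (−n)ⱼ(−k)ⱼ/((2μ)ⱼ j!) · (1 − 1/β)ʲ`. -/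
noncomputable def meixner (μ β : ℝ) (n k : ℕ) : ℝ :=
  Real.sqrt (poch (2 * μ) n / (Nat.factorial n)) * Real.rpow β ((n : ℝ) / 2) *
    ∑ j ∈ range (min n k + 1),
      poch (-(n : ℝ)) j * poch (-(k : ℝ)) j /
        (poch (2 * μ) j * (Nat.factorial j)) * (1 - 1 / β) ^ j

lemma poch_zero (a : ℝ) : poch a 0 = 1 := by simp [poch, ascPochhammer_zero]

lemma poch_succ (a : ℝ) (n : ℕ) : poch a (n + 1) = poch a n * (a + n) := by
  simp [poch, ascPochhammer_succ_right]

lemma poch_succ_left (a : ℝ) (n : ℕ) : poch a (n + 1) = a * poch (a + 1) n := by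
  simp [poch, ascPochhammer_succ_left, Polynomial.eval_comp]

lemma poch_pos {a : ℝ} (ha : 0 < a) (n : ℕ) : 0 < poch a n := by
  induction n with
  | zero => simp [poch_zero]
  | succ k ih => rw [poch_succ]; positivity

lemma poch_add (a : ℝ) (i j : ℕ) : poch a (i + j) = poch a i * poch (a + i) j := by
  have := congrArg (Polynomial.eval a) (ascPochhammer_mul ℝ i j)
  simpa [poch, Polynomial.eval_comp] using this.symm

lemma poch_neg_nat (k j : ℕ) :
    poch (-(k : ℝ)) j = (-1) ^ j * (j.factorial : ℝ) * (k.choose j : ℝ) := by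
  induction j with
  | zero => simp [poch_zero]
  | succ j ih =>
    have h1 : (k.choose (j+1) : ℝ) * (j+1) = (k.choose j : ℝ) * ((k:ℝ) - j) := by
      rcases lt_or_ge j k with h | h
      · have h0 := Nat.choose_succ_right_eq k j
        have h2 : (k.choose (j+1) : ℝ) * ((j:ℝ)+1) = (k.choose j : ℝ) * ((k - j : ℕ) : ℝ) := by
          exact_mod_cast congrArg (Nat.cast : ℕ → ℝ) h0
        rwa [Nat.cast_sub h.le] at h2
      · rcases eq_or_lt_of_le h with h' | h'
        · subst h'; simp [Nat.choose_succ_self]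
        · rw [Nat.choose_eq_zero_of_lt h', Nat.choose_eq_zero_of_lt (by omega)]
          simp
    rw [poch_succ, ih]
    push_cast [Nat.factorial_succ]
    linear_combination ((-1:ℝ)) ^ j * (j.factorial : ℝ) * h1

lemma cv_poly (N : ℕ) : ∀ b c : ℝ,
    ∑ r ∈ range (N + 1), (-1) ^ r * (N.choose r : ℝ) * poch b r * poch (c + r) (N - r)
      = poch (c - b) N := by
  induction N with
  | zero => intro b c; simp [poch_zero]
  | succ N ih =>
    intro b c
    set g : ℕ → ℝ := fun r => (-1) ^ r * ((N+1).choose r : ℝ) * poch b r * poch (c + r) (N + 1 - r) with hg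
    set h : ℕ → ℝ := fun r => (-1) ^ r * (N.choose r : ℝ) * poch b r * poch (c + r) (N + 1 - r) with hh
    set P : ℕ → ℝ := fun r => (-1) ^ r * (N.choose r : ℝ) * poch b r * ((c + r) * poch (c + 1 + r) (N - r)) with hP
    set Q : ℕ → ℝ := fun r => (-1) ^ r * (N.choose r : ℝ) * poch b r * ((b + r) * poch (c + 1 + r) (N - r)) with hQ
    have hargc : ∀ r : ℕ, c + (r:ℝ) + 1 = c + 1 + r := fun r => by ring
    -- h-sum equals P-sum
    have hS1 : ∑ r ∈ range (N + 2), h r = ∑ r ∈ range (N + 1), P r := by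
      rw [Finset.sum_range_succ]
      have : h (N+1) = 0 := by
        simp [hh, Nat.choose_eq_zero_of_lt (by omega : N < N + 1)]
      rw [this, add_zero]
      refine Finset.sum_congr rfl fun r hr => ?_
      have hrN : r < N + 1 := by simpa using hr
      have h2 : N + 1 - r = (N - r) + 1 := by omega
      rw [hh, hP]
      simp only
      rw [h2, poch_succ_left, hargc]
      try ring
    -- h-sum via peeling the first term
    have hS1' : ∑ r ∈ range (N + 2), h r = (∑ r ∈ range (N + 1), h (r+1)) + poch c (N+1) := by
      rw [Finset.sum_range_succ' h (N+1)]
      congr 1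
      simp [hh, poch_zero]
    -- decompose g (r+1)
    have key : ∀ r ∈ range (N + 1), g (r+1) = -(Q r) + h (r+1) := by
      intro r hr
      rw [hg, hh, hQ]
      simp only
      rw [Nat.choose_succ_succ]
      have h2 : N + 1 - (r + 1) = N - r := by omega
      push_cast [h2]
      rw [poch_succ b r]
      rw [show c + ((r:ℝ)+1) = c + 1 + r from by ring]
      push_cast [Nat.succ_eq_add_one]
      ring
    -- finish
    calc ∑ r ∈ range (N + 2), g r
        = (∑ r ∈ range (N + 1), g (r+1)) + g 0 := Finset.sum_range_succ' g (N+1)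
      _ = (∑ r ∈ range (N + 1), (-(Q r) + h (r+1))) + poch c (N+1) := by
          rw [Finset.sum_congr rfl key]; congr 1; simp [hg, poch_zero]
      _ = -(∑ r ∈ range (N + 1), Q r) + ((∑ r ∈ range (N + 1), h (r+1)) + poch c (N+1)) := by
          rw [Finset.sum_add_distrib, Finset.sum_neg_distrib]; ring
      _ = -(∑ r ∈ range (N + 1), Q r) + ∑ r ∈ range (N + 2), h r := by rw [← hS1']
      _ = -(∑ r ∈ range (N + 1), Q r) + ∑ r ∈ range (N + 1), P r := by rw [hS1]
      _ = ∑ r ∈ range (N + 1), (P r - Q r) := by rw [Finset.sum_sub_distrib]; ring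
      _ = ∑ r ∈ range (N + 1), (c - b) * ((-1) ^ r * (N.choose r : ℝ) * poch b r * poch ((c+1) + r) (N - r)) := by
          refine Finset.sum_congr rfl fun r hr => ?_
          rw [hP, hQ]; simp only
          rw [show (c:ℝ) + 1 + r = (c+1) + r from by ring]
          ring
      _ = (c - b) * poch ((c + 1) - b) N := by rw [← Finset.mul_sum, ih b (c+1)]
      _ = poch (c - b) (N + 1) := by
          rw [poch_succ_left (c - b) N, show (c:ℝ) + 1 - b = c - b + 1 from by ring]

lemma binom_summable (b x : ℝ) (hx : |x| < 1) :
    Summable (fun k : ℕ => poch b k * x ^ k / k.factorial) := by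
  set r := (|x| + 1) / 2 with hr
  have hr1 : r < 1 := by rw [hr]; linarith
  have hxr : |x| < r := by rw [hr]; linarith
  have hrx : 0 < r - |x| := by linarith
  set K := ⌈|b| * |x| / (r - |x|)⌉₊ with hK
  have hKle : |b| * |x| ≤ K * (r - |x|) := by
    have := Nat.le_ceil (|b| * |x| / (r - |x|))
    calc |b| * |x| = |b| * |x| / (r - |x|) * (r - |x|) := by field_simp
      _ ≤ K * (r - |x|) := by gcongr
  apply summable_of_ratio_norm_eventually_le hr1
  refine Filter.eventually_atTop.2 ⟨K, fun k hk => ?_⟩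
  have hfe : poch b (k+1) * x ^ (k+1) / (k+1).factorial
      = (poch b k * x ^ k / k.factorial) * ((b + k) * x / (k+1)) := by
    rw [poch_succ]
    have h1 : ((k+1).factorial : ℝ) = (k+1) * k.factorial := by
      push_cast [Nat.factorial_succ]; ring
    rw [h1]
    have h2 : (k.factorial : ℝ) ≠ 0 := Nat.cast_ne_zero.2 k.factorial_ne_zero
    have h3 : ((k:ℝ) + 1) ≠ 0 := by positivity
    field_simp
    ring
  rw [Real.norm_eq_abs, Real.norm_eq_abs, hfe, abs_mul]
  have hq : |(b + k) * x / (k+1)| ≤ r := by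
    rw [abs_div, abs_mul]
    have h3 : |((k:ℝ) + 1)| = (k:ℝ) + 1 := abs_of_pos (by positivity)
    rw [h3, div_le_iff₀ (by positivity)]
    have h4 : |b + (k:ℝ)| ≤ |b| + k := by
      calc |b + (k:ℝ)| ≤ |b| + |(k:ℝ)| := abs_add_le _ _
        _ = |b| + k := by rw [Nat.abs_cast]
    have h5 : (K : ℝ) ≤ k := Nat.cast_le.2 hk
    nlinarith [abs_nonneg x, abs_nonneg b, hxr.le]
  calc |poch b k * x ^ k / k.factorial| * |(b + k) * x / (k+1)|
      ≤ |poch b k * x ^ k / k.factorial| * r := by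
        exact mul_le_mul_of_nonneg_left hq (abs_nonneg _)
    _ = r * |poch b k * x ^ k / k.factorial| := by ring

lemma binom_aux_summable (b ρ : ℝ) (h0 : 0 < ρ) (h1 : ρ < 1) :
    Summable (fun k : ℕ => |poch b k| * k * ρ ^ (k - 1) / k.factorial) := by
  set r := (ρ + 1) / 2 with hr
  have hr1 : r < 1 := by rw [hr]; linarith
  have hxr : ρ < r := by rw [hr]; linarith
  have hrx : 0 < r - ρ := by linarith
  set K := ⌈|b| * ρ / (r - ρ)⌉₊ + 1 with hK
  have hKle : |b| * ρ ≤ K * (r - ρ) := by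
    have h2 := Nat.le_ceil (|b| * ρ / (r - ρ))
    have h3 : (⌈|b| * ρ / (r - ρ)⌉₊ : ℝ) ≤ K := by rw [hK]; push_cast; linarith
    calc |b| * ρ = |b| * ρ / (r - ρ) * (r - ρ) := by field_simp
      _ ≤ K * (r - ρ) := by gcongr; linarith
  apply summable_of_ratio_norm_eventually_le hr1
  refine Filter.eventually_atTop.2 ⟨K, fun k hk => ?_⟩
  have hk1 : 1 ≤ k := le_trans (by omega) hk
  have hfact : ((k+1).factorial : ℝ) = (k+1) * k.factorial := by
    push_cast [Nat.factorial_succ]; ring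
  have hfe : |poch b (k+1)| * ((k:ℝ)+1) * ρ ^ k / (k+1).factorial
      = |poch b k| * |b + k| * ρ ^ k / k.factorial := by
    rw [poch_succ, abs_mul, hfact]
    have h2 : (k.factorial : ℝ) ≠ 0 := Nat.cast_ne_zero.2 k.factorial_ne_zero
    have h3 : ((k:ℝ) + 1) ≠ 0 := by positivity
    field_simp
  have hρk : ρ ^ k = ρ * ρ ^ (k - 1) := by
    conv_lhs => rw [show k = 1 + (k - 1) by omega]
    rw [pow_add, pow_one]
  have hkey : |b + (k:ℝ)| * ρ ≤ r * k := by
    have h4 : |b + (k:ℝ)| ≤ |b| + k := by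
      calc |b + (k:ℝ)| ≤ |b| + |(k:ℝ)| := abs_add_le _ _
        _ = |b| + k := by rw [Nat.abs_cast]
    have h5 : (K : ℝ) ≤ k := Nat.cast_le.2 hk
    nlinarith [h0.le]
  have hnn : ∀ m : ℕ, (0:ℝ) ≤ |poch b m| * m * ρ ^ (m - 1) / m.factorial := by
    intro m; positivity
  rw [Real.norm_eq_abs, Real.norm_eq_abs, abs_of_nonneg (hnn (k+1)), abs_of_nonneg (hnn k)]
  push_cast
  rw [hfe]
  calc |poch b k| * |b + (k:ℝ)| * ρ ^ k / k.factorial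
      = (|b + (k:ℝ)| * ρ) * (|poch b k| * ρ ^ (k-1) / k.factorial) := by rw [hρk]; ring
    _ ≤ (r * k) * (|poch b k| * ρ ^ (k-1) / k.factorial) := by
        exact mul_le_mul_of_nonneg_right hkey (by positivity)
    _ = r * (|poch b k| * (k:ℝ) * ρ ^ (k-1) / k.factorial) := by ring

lemma binom_hasSum (b x : ℝ) (hb : 0 < b) (h0 : 0 ≤ x) (h1 : x < 1) :
    HasSum (fun k : ℕ => poch b k * x ^ k / k.factorial) ((1 - x) ^ (-b)) := by
  set ρ := (1 + x) / 2 with hρdef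
  have hρ0 : 0 < ρ := by rw [hρdef]; linarith
  have hρ1 : ρ < 1 := by rw [hρdef]; linarith
  have hxρ : x < ρ := by rw [hρdef]; linarith
  set s : Set ℝ := Set.Ioo (-ρ) ρ with hsdef
  have hs : IsOpen s := isOpen_Ioo
  have hsc : IsPreconnected s := isPreconnected_Ioo
  have h0s : (0:ℝ) ∈ s := ⟨by linarith, hρ0⟩
  have hxs : x ∈ s := ⟨by linarith, hxρ⟩
  have husum : Summable (fun k : ℕ => |poch b k| * k * ρ ^ (k-1) / k.factorial) :=
    binom_aux_summable b ρ hρ0 hρ1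
  have hderiv : ∀ (k : ℕ), ∀ y ∈ s, HasDerivAt (fun z : ℝ => poch b k * z ^ k / k.factorial)
      (poch b k * ((k:ℝ) * y ^ (k-1)) / k.factorial) y := by
    intro k y _
    simpa [mul_div_assoc] using
      (((hasDerivAt_pow k y).const_mul (poch b k)).div_const (k.factorial : ℝ))
  have hbound : ∀ (k : ℕ), ∀ y ∈ s, ‖poch b k * ((k:ℝ) * y ^ (k-1)) / k.factorial‖
      ≤ |poch b k| * k * ρ ^ (k-1) / k.factorial := by
    intro k y hy
    have hyρ : |y| ≤ ρ := by
      rw [abs_le]; exact ⟨hy.1.le, hy.2.le⟩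
    rw [Real.norm_eq_abs, abs_div, abs_mul, abs_mul, Nat.abs_cast, Nat.abs_cast, abs_pow,
      ← mul_assoc]
    gcongr
  have hsum0 : Summable (fun k : ℕ => poch b k * (0:ℝ) ^ k / k.factorial) :=
    binom_summable b 0 (by simp)
  set f : ℝ → ℝ := fun z => ∑' k : ℕ, poch b k * z ^ k / k.factorial with hfdef
  set D : ℝ → ℝ := fun y => ∑' k : ℕ, poch b k * ((k:ℝ) * y ^ (k-1)) / k.factorial with hDdef
  have HD : ∀ y ∈ s, HasDerivAt f (D y) y := fun y hy =>
    hasDerivAt_tsum_of_isPreconnected husum hs hsc hderiv hbound h0s hsum0 hy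
  have key : ∀ y ∈ s, D y * (1 - y) = b * f y := by
    intro y hy
    have hy1 : |y| < 1 := lt_trans (abs_lt.2 ⟨hy.1, hy.2⟩) hρ1
    have Sf : Summable (fun k : ℕ => poch b k * y ^ k / k.factorial) := binom_summable b y hy1
    have Sd : Summable (fun k : ℕ => poch b k * ((k:ℝ) * y ^ (k-1)) / k.factorial) :=
      Summable.of_norm_bounded husum (fun k => hbound k y hy)
    have h1s : HasSum (fun k : ℕ => poch b k * ((k:ℝ) * y ^ (k-1)) / k.factorial) (D y) := Sd.hasSum
    have h2 : HasSum (fun k : ℕ => poch b (k+1) * (((k:ℝ)+1) * y ^ k) / (k+1).factorial) (D y) := by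
      have := (hasSum_nat_add_iff
        (f := fun k : ℕ => poch b k * ((k:ℝ) * y ^ (k-1)) / k.factorial) 1).2 (by simpa using h1s)
      simpa using this
    have h3 : (fun k : ℕ => poch b (k+1) * (((k:ℝ)+1) * y ^ k) / (k+1).factorial)
        = fun k : ℕ => poch b k * (b + k) * y ^ k / k.factorial := by
      funext k
      rw [poch_succ]
      have hfact : ((k+1).factorial : ℝ) = ((k:ℝ)+1) * k.factorial := by
        push_cast [Nat.factorial_succ]; ring
      rw [hfact]
      have h2' : (k.factorial : ℝ) ≠ 0 := Nat.cast_ne_zero.2 k.factorial_ne_zero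
      have h3' : ((k:ℝ) + 1) ≠ 0 := by positivity
      field_simp
    rw [h3] at h2
    have h4 : HasSum (fun k : ℕ => b * (poch b k * y ^ k / k.factorial)) (b * f y) :=
      Sf.hasSum.mul_left b
    have h5 : HasSum (fun k : ℕ => poch b k * ((k:ℝ) * y ^ (k-1)) / k.factorial * y) (D y * y) :=
      h1s.mul_right y
    have h6 : (fun k : ℕ => poch b k * ((k:ℝ) * y ^ (k-1)) / k.factorial * y)
        = fun k : ℕ => poch b k * ((k:ℝ) * y ^ k) / k.factorial := by
      funext k
      cases k with
      | zero => simp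
      | succ k =>
        have : (k + 1) - 1 = k := rfl
        rw [this, pow_succ]
        ring
    rw [h6] at h5
    have h7 : (fun k : ℕ => poch b k * (b + k) * y ^ k / k.factorial)
        = fun k : ℕ => b * (poch b k * y ^ k / k.factorial)
            + poch b k * ((k:ℝ) * y ^ k) / k.factorial := by
      funext k
      have h2' : (k.factorial : ℝ) ≠ 0 := Nat.cast_ne_zero.2 k.factorial_ne_zero
      field_simp
    rw [h7] at h2
    have h8 := h4.add h5
    have h9 := h2.unique h8
    linarith [h9]
  have hrpow : ∀ y ∈ s, HasDerivAt (fun z : ℝ => (1 - z) ^ b) (b * (1-y) ^ (b-1) * (-1)) y := by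
    intro y hy
    have h1y : (0:ℝ) < 1 - y := by have := hy.2; simp only [hsdef, Set.mem_Ioo] at hy; linarith [hρ1]
    have hbase : HasDerivAt (fun z : ℝ => 1 - z) (-1) y := (hasDerivAt_id y).const_sub 1
    exact (Real.hasDerivAt_rpow_const (Or.inl h1y.ne')).comp y hbase
  have hφ0 : ∀ y ∈ s, HasDerivAt (fun z => f z * (1 - z) ^ b) 0 y := by
    intro y hy
    have h1y : (0:ℝ) < 1 - y := by simp only [hsdef, Set.mem_Ioo] at hy; linarith [hρ1]
    have H := (HD y hy).mul (hrpow y hy)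
    refine H.congr_deriv (Eq.symm ?_)
    have e := Real.rpow_add_one h1y.ne' (b-1)
    rw [show b - 1 + 1 = b by ring] at e
    rw [e]
    have hk := key y hy
    linear_combination (-( (1-y) ^ (b-1))) * hk
  have hsub : Set.Icc (0:ℝ) x ⊆ s := fun y hy => ⟨by linarith [hy.1], lt_of_le_of_lt hy.2 hxρ⟩
  have hconst := constant_of_has_deriv_right_zero (f := fun z => f z * (1 - z) ^ b) (a := 0) (b := x)
    (fun y hy => ((hφ0 y (hsub hy)).continuousAt).continuousWithinAt)
    (fun y hy => (hφ0 y (hsub (Set.Ico_subset_Icc_self hy))).hasDerivWithinAt)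
    x (Set.right_mem_Icc.2 h0)
  have hf0 : f 0 = 1 := by
    rw [hfdef]
    simp only
    rw [tsum_eq_single 0 (fun k hk => by simp [zero_pow hk])]
    simp [poch_zero]
  have hconst' : f x * (1 - x) ^ b = f 0 * ((1:ℝ) - 0) ^ b := hconst
  rw [hf0] at hconst'
  simp only [sub_zero, Real.one_rpow, one_mul] at hconst'
  have h1x : (0:ℝ) < 1 - x := by linarith
  have hpow : (0:ℝ) < (1-x) ^ b := Real.rpow_pos_of_pos h1x b
  have hfx : f x = (1-x) ^ (-b) := by
    rw [Real.rpow_neg h1x.le, ← one_div, eq_div_iff hpow.ne']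
    exact hconst'
  have := (binom_summable b x (by rwa [abs_of_nonneg h0])).hasSum
  rwa [show (∑' k : ℕ, poch b k * x ^ k / k.factorial) = f x from rfl, hfx] at this

lemma choose1_hasSum (b β : ℝ) (hb : 0 < b) (hβ0 : 0 < β) (hβ1 : β < 1) (r : ℕ) :
    HasSum (fun t : ℕ => poch b t * β ^ t / t.factorial * (t.choose r : ℝ))
      (poch b r * β ^ r / r.factorial * (1 - β) ^ (-(b + r))) := by
  set F : ℕ → ℝ := fun t => poch b t * β ^ t / t.factorial * (t.choose r : ℝ) with hF
  have hshift : ∀ s : ℕ, F (s + r)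
      = (poch b r * β ^ r / r.factorial) * (poch (b + r) s * β ^ s / s.factorial) := by
    intro s
    rw [hF]
    simp only
    have h1 : poch b (s + r) = poch b r * poch (b + r) s := by
      rw [show s + r = r + s from by omega, poch_add]
    have h2 : (((s+r).choose r : ℕ) : ℝ) * (s.factorial : ℝ) * (r.factorial : ℝ)
        = ((s+r).factorial : ℝ) := by
      exact_mod_cast congrArg (Nat.cast : ℕ → ℝ) (Nat.add_choose_mul_factorial_mul_factorial s r)
    have h3 : ((s+r).factorial : ℝ) ≠ 0 := Nat.cast_ne_zero.2 (s+r).factorial_ne_zero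
    have h4 : (s.factorial : ℝ) ≠ 0 := Nat.cast_ne_zero.2 s.factorial_ne_zero
    have h5 : (r.factorial : ℝ) ≠ 0 := Nat.cast_ne_zero.2 r.factorial_ne_zero
    have hC : (((s+r).choose r : ℕ) : ℝ) ≠ 0 :=
      Nat.cast_ne_zero.2 (Nat.choose_pos (by omega)).ne'
    rw [h1, pow_add, ← h2]
    field_simp
  have hmain : HasSum (fun s : ℕ => F (s + r))
      ((poch b r * β ^ r / r.factorial) * (1 - β) ^ (-(b + r))) := by
    have hbr : (0:ℝ) < b + r := by have := Nat.cast_nonneg (α := ℝ) r; linarith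
    have hx := (binom_hasSum (b + r) β hbr hβ0.le hβ1).mul_left
      (poch b r * β ^ r / r.factorial)
    have he : (fun s : ℕ => F (s + r))
        = fun s : ℕ => (poch b r * β ^ r / r.factorial) * (poch (b + r) s * β ^ s / s.factorial) :=
      funext hshift
    rw [he]
    exact hx
  have hzero : ∑ t ∈ range r, F t = 0 := by
    apply Finset.sum_eq_zero
    intro t ht
    rw [hF]
    simp [Nat.choose_eq_zero_of_lt (mem_range.1 ht)]
  have := (hasSum_nat_add_iff (f := F) r).1 hmain
  rwa [hzero, add_zero] at this

lemma choose2_hasSum (a β : ℝ) (ha : 0 < a) (hβ0 : 0 < β) (hβ1 : β < 1) (i j : ℕ) :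
    HasSum (fun k : ℕ => poch a k * β ^ k / k.factorial * (k.choose i : ℝ) * (k.choose j : ℝ))
      (∑ r ∈ range (i + 1), (poch a j * β ^ j / j.factorial) * (j.choose (i - r) : ℝ)
        * (poch (a + j) r * β ^ r / r.factorial) * (1 - β) ^ (-(a + j + r))) := by
  set F : ℕ → ℝ := fun k => poch a k * β ^ k / k.factorial * (k.choose i : ℝ) * (k.choose j : ℝ)
    with hF
  have hshift : ∀ t : ℕ, F (t + j)
      = ∑ r ∈ range (i + 1), ((poch a j * β ^ j / j.factorial) * (j.choose (i - r) : ℝ))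
          * (poch (a + j) t * β ^ t / t.factorial * (t.choose r : ℝ)) := by
    intro t
    rw [hF]
    simp only
    have h1 : poch a (t + j) = poch a j * poch (a + j) t := by
      rw [show t + j = j + t from by omega, poch_add]
    have h2 : (((t+j).choose j : ℕ) : ℝ) * (t.factorial : ℝ) * (j.factorial : ℝ)
        = ((t+j).factorial : ℝ) := by
      exact_mod_cast congrArg (Nat.cast : ℕ → ℝ) (Nat.add_choose_mul_factorial_mul_factorial t j)
    have hvdm : ((t+j).choose i : ℝ) = ∑ r ∈ range (i + 1), (t.choose r : ℝ) * (j.choose (i - r) : ℝ) := by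
      have := Nat.add_choose_eq t j i
      rw [Finset.Nat.sum_antidiagonal_eq_sum_range_succ_mk] at this
      exact_mod_cast congrArg (Nat.cast : ℕ → ℝ) this
    have h3 : ((t+j).factorial : ℝ) ≠ 0 := Nat.cast_ne_zero.2 (t+j).factorial_ne_zero
    have h4 : (t.factorial : ℝ) ≠ 0 := Nat.cast_ne_zero.2 t.factorial_ne_zero
    have h5 : (j.factorial : ℝ) ≠ 0 := Nat.cast_ne_zero.2 j.factorial_ne_zero
    have hstep : poch a (t+j) * β ^ (t+j) / (t+j).factorial * ((t+j).choose i : ℝ) * ((t+j).choose j : ℝ)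
        = (poch a j * β ^ j / j.factorial) * (poch (a + j) t * β ^ t / t.factorial)
          * ((t+j).choose i : ℝ) := by
      have hC : (((t+j).choose j : ℕ) : ℝ) ≠ 0 :=
        Nat.cast_ne_zero.2 (Nat.choose_pos (by omega)).ne'
      rw [h1, pow_add, ← h2]
      field_simp
    rw [hstep, hvdm, Finset.mul_sum]
    refine Finset.sum_congr rfl fun r hr => ?_
    ring
  have hmain : HasSum (fun t : ℕ => F (t + j))
      (∑ r ∈ range (i + 1), (poch a j * β ^ j / j.factorial) * (j.choose (i - r) : ℝ)
        * (poch (a + j) r * β ^ r / r.factorial) * (1 - β) ^ (-(a + j + r))) := by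
    rw [funext hshift]
    refine hasSum_sum fun r _ => ?_
    have haj : (0:ℝ) < a + j := by have := Nat.cast_nonneg (α := ℝ) j; linarith
    have hx := (choose1_hasSum (a + j) β haj hβ0 hβ1 r).mul_left
      ((poch a j * β ^ j / j.factorial) * (j.choose (i - r) : ℝ))
    rw [show -(a + (j:ℝ) + (r:ℝ)) = -(a + ↑j + ↑r) from by ring] at hx
    convert hx using 1
    · rfl
    ring
  have hzero : ∑ t ∈ range j, F t = 0 := by
    apply Finset.sum_eq_zero
    intro t ht
    rw [hF]
    simp [Nat.choose_eq_zero_of_lt (mem_range.1 ht)]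
  have := (hasSum_nat_add_iff (f := F) j).1 hmain
  rwa [hzero, add_zero] at this

lemma cv_div (N : ℕ) (b c : ℝ) (hc : 0 < c) :
    ∑ r ∈ range (N + 1), poch (-(N:ℝ)) r * poch b r / (poch c r * r.factorial)
      = poch (c - b) N / poch c N := by
  rw [eq_div_iff (poch_pos hc N).ne', ← cv_poly N b c, Finset.sum_mul]
  refine Finset.sum_congr rfl fun r hr => ?_
  have hrN : r ≤ N := by simpa [Nat.lt_succ_iff] using hr
  have hsplit : poch c N = poch c r * poch (c + r) (N - r) := by
    rw [← poch_add c r (N - r)]; congr 1; omega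
  rw [poch_neg_nat N r, hsplit]
  have h1 : poch c r ≠ 0 := (poch_pos hc r).ne'
  have h2 : (r.factorial : ℝ) ≠ 0 := Nat.cast_ne_zero.2 r.factorial_ne_zero
  field_simp

lemma tri1 (n : ℕ) (f : ℕ → ℕ → ℝ) :
    ∑ i ∈ range (n+1), ∑ r ∈ range (i+1), f i r
      = ∑ r ∈ range (n+1), ∑ s ∈ range (n+1-r), f (r+s) r := by
  rw [Finset.sum_comm' (s := range (n+1)) (t := fun i => range (i+1)) (t' := range (n+1))
    (s' := fun r => Ico r (n+1)) (fun i r => by simp [mem_range, mem_Ico]; omega)]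
  refine Finset.sum_congr rfl fun r _ => ?_
  rw [Finset.sum_Ico_eq_sum_range]

lemma tri2 (n : ℕ) (g : ℕ → ℕ → ℝ) :
    ∑ r ∈ range (n+1), ∑ s ∈ range (n+1-r), g r s
      = ∑ s ∈ range (n+1), ∑ r ∈ range (n+1-s), g r s :=
  Finset.sum_comm' (fun r s => by simp [mem_range]; omega)

lemma finite_key (a γ : ℝ) (ha : 0 < a) {n m : ℕ} (hmn : m ≤ n) :
    ∑ i ∈ range (n+1), ∑ j ∈ range (m+1), ∑ r ∈ range (i+1),
      poch (-(n:ℝ)) i * poch (-(m:ℝ)) j * (j.choose (i - r) : ℝ) * poch (a + j) r * γ ^ (i - r)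
        / (poch a i * j.factorial * r.factorial)
    = if n = m then (n.factorial : ℝ) * (γ + 1) ^ n / poch a n else 0 := by
  -- move j to the outside
  rw [Finset.sum_comm]
  -- V j s : value of the inner double sum after reindexing and Chu--Vandermonde
  have inner_eq : ∀ j ∈ range (m+1),
      ∑ i ∈ range (n+1), ∑ r ∈ range (i+1),
        poch (-(n:ℝ)) i * poch (-(m:ℝ)) j * (j.choose (i - r) : ℝ) * poch (a + j) r * γ ^ (i - r)
          / (poch a i * j.factorial * r.factorial)
      = ∑ s ∈ range (n+1),
          poch (-(n:ℝ)) s * poch (-(m:ℝ)) j * (j.choose s : ℝ) * γ ^ s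
            / (poch a s * j.factorial) * (poch ((s:ℝ) - j) (n-s) / poch (a + s) (n-s)) := by
    intro j hj
    rw [tri1 n (fun i r =>
      poch (-(n:ℝ)) i * poch (-(m:ℝ)) j * (j.choose (i - r) : ℝ) * poch (a + j) r * γ ^ (i - r)
        / (poch a i * j.factorial * r.factorial))]
    rw [tri2 n]
    refine Finset.sum_congr rfl fun s hs => ?_
    have hsn : s ≤ n := by simpa [Nat.lt_succ_iff] using hs
    have hterm : ∀ r,
        poch (-(n:ℝ)) (r+s) * poch (-(m:ℝ)) j * (j.choose ((r+s) - r) : ℝ) * poch (a + j) r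
            * γ ^ ((r+s) - r) / (poch a (r+s) * j.factorial * r.factorial)
        = (poch (-(n:ℝ)) s * poch (-(m:ℝ)) j * (j.choose s : ℝ) * γ ^ s
            / (poch a s * j.factorial))
          * (poch (-((n-s : ℕ) : ℝ)) r * poch (a + j) r / (poch (a + s) r * r.factorial)) := by
      intro r
      have e1 : (r+s) - r = s := by omega
      have e2 : poch (-(n:ℝ)) (r+s) = poch (-(n:ℝ)) s * poch (-((n-s : ℕ) : ℝ)) r := by
        rw [show r + s = s + r from by omega, poch_add]
        congr 2
        push_cast [Nat.cast_sub hsn]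
        ring
      have e3 : poch a (r+s) = poch a s * poch (a + s) r := by
        rw [show r + s = s + r from by omega, poch_add]
      have h1 : poch a s ≠ 0 := (poch_pos ha s).ne'
      have h2 : poch (a + s) r ≠ 0 := by
        refine (poch_pos ?_ r).ne'
        have := Nat.cast_nonneg (α := ℝ) s; linarith
      have h3 : (j.factorial : ℝ) ≠ 0 := Nat.cast_ne_zero.2 j.factorial_ne_zero
      have h4 : (r.factorial : ℝ) ≠ 0 := Nat.cast_ne_zero.2 r.factorial_ne_zero
      rw [e1, e2, e3]
      field_simp
    rw [Finset.sum_congr rfl (fun r _ => hterm r), ← Finset.mul_sum]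
    congr 1
    have e4 : n + 1 - s = (n - s) + 1 := by omega
    rw [e4]
    have hcv := cv_div (n - s) (a + j) (a + s)
      (by have := Nat.cast_nonneg (α := ℝ) s; linarith)
    rw [show ((a + (s:ℝ)) - (a + (j:ℝ))) = (s:ℝ) - j from by ring] at hcv
    exact hcv
  rw [Finset.sum_congr rfl inner_eq]
  -- terms with j < n vanish
  have hvanish : ∀ j ∈ range (m+1), j < n →
      ∑ s ∈ range (n+1),
          poch (-(n:ℝ)) s * poch (-(m:ℝ)) j * (j.choose s : ℝ) * γ ^ s
            / (poch a s * j.factorial) * (poch ((s:ℝ) - j) (n-s) / poch (a + s) (n-s)) = 0 := by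
    intro j _ hjn
    refine Finset.sum_eq_zero fun s hs => ?_
    have hsn : s ≤ n := by simpa [Nat.lt_succ_iff] using hs
    by_cases hsj : s ≤ j
    · have e : ((s:ℝ) - j) = -(((j - s : ℕ)) : ℝ) := by push_cast [Nat.cast_sub hsj]; ring
      rw [e, poch_neg_nat (j - s) (n - s),
        Nat.choose_eq_zero_of_lt (by omega : j - s < n - s)]
      simp
    · rw [Nat.choose_eq_zero_of_lt (by omega : j < s)]
      simp
  by_cases hnm : n = m
  · subst hnm
    rw [if_pos rfl]
    rw [Finset.sum_eq_single_of_mem n (by simp)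
      (fun j hj hjn => hvanish j hj (by simp at hj; omega))]
    have hterm2 : ∀ s ∈ range (n+1),
        poch (-(n:ℝ)) s * poch (-(n:ℝ)) n * (n.choose s : ℝ) * γ ^ s
            / (poch a s * n.factorial) * (poch ((s:ℝ) - n) (n-s) / poch (a + s) (n-s))
        = (n.factorial : ℝ) / poch a n * (γ ^ s * 1 ^ (n - s) * (n.choose s : ℝ)) := by
      intro s hs
      have hsn : s ≤ n := by simpa [Nat.lt_succ_iff] using hs
      have e1 : poch (-(n:ℝ)) n = (-1)^n * (n.factorial : ℝ) := by
        rw [poch_neg_nat n n, Nat.choose_self]; simp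
      have e2 : poch (-(n:ℝ)) s = (-1)^s * (s.factorial : ℝ) * (n.choose s : ℝ) :=
        poch_neg_nat n s
      have e3 : poch ((s:ℝ) - n) (n-s) = (-1)^(n-s) * ((n-s).factorial : ℝ) := by
        have e : ((s:ℝ) - n) = -(((n - s : ℕ)) : ℝ) := by push_cast [Nat.cast_sub hsn]; ring
        rw [e, poch_neg_nat (n - s) (n - s), Nat.choose_self]; simp
      have e4 : poch a s * poch (a + s) (n - s) = poch a n := by
        rw [← poch_add]; congr 1; omega
      have e5 : ((n.choose s : ℕ) : ℝ) * (s.factorial : ℝ) * ((n-s).factorial : ℝ)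
          = (n.factorial : ℝ) := by
        exact_mod_cast congrArg (Nat.cast : ℕ → ℝ)
          (Nat.choose_mul_factorial_mul_factorial hsn)
      have hsg : (-1:ℝ)^s * (-1)^(n-s) = (-1:ℝ)^n := by
        rw [← pow_add]; congr 1; omega
      have hsq : (-1:ℝ)^n * (-1:ℝ)^n = 1 := by
        rw [← pow_add, ← two_mul, pow_mul]; norm_num
      have h1 : poch a s ≠ 0 := (poch_pos ha s).ne'
      have h2 : poch (a + s) (n - s) ≠ 0 := by
        refine (poch_pos ?_ (n - s)).ne'
        have := Nat.cast_nonneg (α := ℝ) s; linarith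
      have h3 : (n.factorial : ℝ) ≠ 0 := Nat.cast_ne_zero.2 n.factorial_ne_zero
      have h4 : poch a n ≠ 0 := (poch_pos ha n).ne'
      have hbig : (-1:ℝ)^s * (s.factorial : ℝ) * (n.choose s : ℝ) * ((-1:ℝ)^n * (n.factorial : ℝ))
            * (n.choose s : ℝ) * γ ^ s * ((-1:ℝ)^(n-s) * ((n-s).factorial : ℝ))
          = (n.factorial : ℝ) * (γ ^ s * 1 ^ (n-s) * (n.choose s : ℝ)) * (n.factorial : ℝ) := by
        calc (-1:ℝ)^s * (s.factorial : ℝ) * (n.choose s : ℝ) * ((-1:ℝ)^n * (n.factorial : ℝ))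
              * (n.choose s : ℝ) * γ ^ s * ((-1:ℝ)^(n-s) * ((n-s).factorial : ℝ))
            = ((-1:ℝ)^s * (-1:ℝ)^(n-s)) * (-1:ℝ)^n
                * ((n.choose s : ℝ) * (s.factorial : ℝ) * ((n-s).factorial : ℝ))
                * (n.factorial : ℝ) * (n.choose s : ℝ) * γ ^ s := by ring
          _ = ((-1:ℝ)^n * (-1:ℝ)^n) * (n.factorial : ℝ)
                * (n.factorial : ℝ) * (n.choose s : ℝ) * γ ^ s := by rw [hsg, e5]
          _ = (n.factorial : ℝ) * (γ ^ s * 1 ^ (n-s) * (n.choose s : ℝ)) * (n.factorial : ℝ) := by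
              rw [hsq]; ring
      rw [e1, e2, e3]
      rw [div_mul_div_comm, div_mul_eq_mul_div]
      rw [div_eq_div_iff (mul_ne_zero (mul_ne_zero h1 h3) h2) h4]
      rw [← e4]
      linear_combination (poch a s * poch (a + (s:ℝ)) (n - s)) * hbig
    rw [Finset.sum_congr rfl hterm2, ← Finset.mul_sum, ← add_pow, div_mul_eq_mul_div]

  · rw [if_neg hnm]
    refine Finset.sum_eq_zero fun j hj => ?_
    exact hvanish j hj (by simp [Nat.lt_succ_iff] at hj; omega)

lemma meixner_eq (μ β : ℝ) (n k : ℕ) :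
    meixner μ β n k = Real.sqrt (poch (2*μ) n / n.factorial) * Real.rpow β ((n:ℝ)/2) *
      ∑ i ∈ range (n+1),
        poch (-(n:ℝ)) i * poch (-(k:ℝ)) i / (poch (2*μ) i * i.factorial) * (1 - 1/β)^i := by
  rw [meixner]
  congr 1
  apply Finset.sum_subset
  · apply Finset.range_subset_range.2; omega
  · intro i hi hni
    have hki : k < i := by
      simp only [mem_range] at hi hni
      omega
    rw [poch_neg_nat k i, Nat.choose_eq_zero_of_lt hki]
    simp

lemma key (μ β : ℝ) (hμ : 0 < μ) (hβ0 : 0 < β) (hβ1 : β < 1) (n m : ℕ) (hmn : m ≤ n) :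
    (Summable (fun k : ℕ =>
      |Real.rpow (1 - β) (2 * μ) * poch (2 * μ) k * (β ^ k / (Nat.factorial k)) *
        meixner μ β n k * meixner μ β m k|)) ∧
    ∑' k : ℕ, Real.rpow (1 - β) (2 * μ) * poch (2 * μ) k *
        (β ^ k / (Nat.factorial k)) * meixner μ β n k * meixner μ β m k
      = if n = m then (1:ℝ) else 0 := by
  have ha : (0:ℝ) < 2 * μ := by linarith
  have h1β : (0:ℝ) < 1 - β := by linarith
  have hβne : β ≠ 0 := hβ0.ne'
  set a : ℝ := 2 * μ with ha_def
  set c : ℝ := 1 - 1/β with hc_def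
  set γ : ℝ := (1 - β)/β with hγ_def
  have hγ0 : 0 < γ := by positivity
  set An : ℝ := Real.sqrt (poch a n / n.factorial) * Real.rpow β ((n:ℝ)/2) with hAn
  set Am : ℝ := Real.sqrt (poch a m / m.factorial) * Real.rpow β ((m:ℝ)/2) with hAm
  set D : ℕ → ℕ → ℝ := fun i j => Real.rpow (1-β) a * An * Am
      * (poch (-(n:ℝ)) i / (poch a i * i.factorial) * c^i * ((-1)^i * i.factorial))
      * (poch (-(m:ℝ)) j / (poch a j * j.factorial) * c^j * ((-1)^j * j.factorial)) with hD
  set U : ℕ → ℕ → ℕ → ℝ :=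
    fun i j k => poch a k * β^k / k.factorial * (k.choose i : ℝ) * (k.choose j : ℝ) with hU
  have expand : ∀ k : ℕ, Real.rpow (1 - β) (2 * μ) * poch (2 * μ) k * (β ^ k / (Nat.factorial k)) *
        meixner μ β n k * meixner μ β m k
      = ∑ i ∈ range (n+1), ∑ j ∈ range (m+1), D i j * U i j k := by
    intro k
    rw [meixner_eq μ β n k, meixner_eq μ β m k]
    rw [show ∀ x y z w v : ℝ, x * (y * z) * (w * v) = (x * y * w) * (z * v) from by intros; ring]
    rw [Finset.sum_mul_sum]
    rw [Finset.mul_sum]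
    refine Finset.sum_congr rfl fun i _ => ?_
    rw [Finset.mul_sum]
    refine Finset.sum_congr rfl fun j _ => ?_
    rw [hD, hU]
    simp only
    rw [poch_neg_nat k i, poch_neg_nat k j]
    ring
  set SV : ℕ → ℕ → ℝ := fun i j => ∑ r ∈ range (i + 1),
      (poch a j * β ^ j / j.factorial) * (j.choose (i - r) : ℝ)
        * (poch (a + j) r * β ^ r / r.factorial) * (1 - β) ^ (-(a + j + r)) with hSV
  have HSU : ∀ i j : ℕ, HasSum (fun k => U i j k) (SV i j) := by
    intro i j
    rw [hU, hSV]
    exact choose2_hasSum a β ha hβ0 hβ1 i j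
  have HS : HasSum (fun k : ℕ => Real.rpow (1 - β) (2 * μ) * poch (2 * μ) k *
        (β ^ k / (Nat.factorial k)) * meixner μ β n k * meixner μ β m k)
      (∑ i ∈ range (n+1), ∑ j ∈ range (m+1), D i j * SV i j) := by
    rw [show (fun k : ℕ => Real.rpow (1 - β) (2 * μ) * poch (2 * μ) k *
        (β ^ k / (Nat.factorial k)) * meixner μ β n k * meixner μ β m k)
      = fun k => ∑ i ∈ range (n+1), ∑ j ∈ range (m+1), D i j * U i j k from funext expand]
    exact hasSum_sum fun i _ => hasSum_sum fun j _ => (HSU i j).mul_left (D i j)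
  constructor
  · -- absolute summability
    have hU_nonneg : ∀ i j k : ℕ, 0 ≤ U i j k := by
      intro i j k
      rw [hU]
      have h1 : (0:ℝ) ≤ poch a k := (poch_pos ha k).le
      positivity
    have hBsum : Summable (fun k : ℕ =>
        ∑ i ∈ range (n+1), ∑ j ∈ range (m+1), |D i j| * U i j k) :=
      summable_sum fun i _ => summable_sum fun j _ => ((HSU i j).summable.mul_left |D i j|)
    refine Summable.of_nonneg_of_le (fun k => abs_nonneg _) (fun k => ?_) hBsum
    rw [expand k]
    refine (Finset.abs_sum_le_sum_abs _ _).trans ?_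
    refine Finset.sum_le_sum fun i _ => ?_
    refine (Finset.abs_sum_le_sum_abs _ _).trans ?_
    refine Finset.sum_le_sum fun j _ => ?_
    rw [abs_mul, abs_of_nonneg (hU_nonneg i j k)]
  · -- value
    rw [HS.tsum_eq]
    have hpochine : ∀ i : ℕ, poch a i ≠ 0 := fun i => (poch_pos ha i).ne'
    have perr : ∀ i j r : ℕ, r ≤ i →
        D i j * ((poch a j * β ^ j / j.factorial) * (j.choose (i - r) : ℝ)
          * (poch (a + j) r * β ^ r / r.factorial) * (1 - β) ^ (-(a + (j:ℝ) + (r:ℝ))))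
        = An * Am * (poch (-(n:ℝ)) i * poch (-(m:ℝ)) j * (j.choose (i - r) : ℝ)
            * poch (a + (j:ℝ)) r * γ ^ (i - r) / (poch a i * j.factorial * r.factorial)) := by
      intro i j r hri
      have e1 : Real.rpow (1-β) a * (1-β) ^ (-(a+(j:ℝ)+(r:ℝ))) = ((1-β)⁻¹)^(j+r) := by
        rw [show Real.rpow (1-β) a = (1-β) ^ a from rfl]
        rw [← Real.rpow_add h1β,
          show a + -(a+(j:ℝ)+(r:ℝ)) = -(((j+r:ℕ):ℝ)) from by push_cast; ring,
          Real.rpow_neg h1β.le, Real.rpow_natCast, ← inv_pow]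
      have hc1 : ∀ N : ℕ, c^N * (-1:ℝ)^N = γ^N := by
        intro N
        rw [← mul_pow]
        congr 1
        rw [hc_def, hγ_def]
        field_simp; ring
      have hone : γ^r * γ^j * (β^j * β^r * ((1-β)⁻¹)^(j+r)) = 1 := by
        have g1 : γ^r * γ^j = γ^(j+r) := by rw [← pow_add]; congr 1; omega
        have g2 : β^j * β^r = β^(j+r) := by rw [← pow_add]
        rw [g1, g2, ← mul_pow, ← mul_pow]
        rw [show γ * (β * (1-β)⁻¹) = 1 from by rw [hγ_def]; field_simp]
        exact one_pow _
      have e2 : c^i * (-1:ℝ)^i * (c^j * (-1:ℝ)^j) * (β^j * β^r * ((1-β)⁻¹)^(j+r))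
          = γ^(i-r) := by
        rw [hc1 i, hc1 j]
        have g3 : γ^i = γ^r * γ^(i-r) := by rw [← pow_add]; congr 1; omega
        rw [g3]
        linear_combination γ^(i-r) * hone
      have h3 : (i.factorial : ℝ) ≠ 0 := Nat.cast_ne_zero.2 i.factorial_ne_zero
      have h4 : (j.factorial : ℝ) ≠ 0 := Nat.cast_ne_zero.2 j.factorial_ne_zero
      have h5 : (r.factorial : ℝ) ≠ 0 := Nat.cast_ne_zero.2 r.factorial_ne_zero
      rw [hD]
      simp only
      calc (Real.rpow (1-β) a * An * Am
            * (poch (-(n:ℝ)) i / (poch a i * i.factorial) * c^i * ((-1)^i * i.factorial))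
            * (poch (-(m:ℝ)) j / (poch a j * j.factorial) * c^j * ((-1)^j * j.factorial)))
          * ((poch a j * β ^ j / j.factorial) * (j.choose (i - r) : ℝ)
            * (poch (a + j) r * β ^ r / r.factorial) * (1 - β) ^ (-(a + (j:ℝ) + (r:ℝ))))
          = (Real.rpow (1-β) a * (1-β) ^ (-(a+(j:ℝ)+(r:ℝ))))
            * ((c^i * (-1:ℝ)^i * (c^j * (-1:ℝ)^j) * (β^j * β^r))
            * (An * Am * (poch (-(n:ℝ)) i * poch (-(m:ℝ)) j * (j.choose (i - r) : ℝ)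
                * poch (a + (j:ℝ)) r)
              * ((i.factorial : ℝ) / (poch a i * i.factorial))
              * (poch a j * (j.factorial : ℝ)
                  / (poch a j * (j.factorial : ℝ) * (j.factorial : ℝ)))
              * (1 / (r.factorial : ℝ)))) := by ring
        _ = (c^i * (-1:ℝ)^i * (c^j * (-1:ℝ)^j) * (β^j * β^r * ((1-β)⁻¹)^(j+r)))
            * (An * Am * (poch (-(n:ℝ)) i * poch (-(m:ℝ)) j * (j.choose (i - r) : ℝ)
                * poch (a + (j:ℝ)) r)
              * ((i.factorial : ℝ) / (poch a i * i.factorial))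
              * (poch a j * (j.factorial : ℝ)
                  / (poch a j * (j.factorial : ℝ) * (j.factorial : ℝ)))
              * (1 / (r.factorial : ℝ))) := by rw [e1]; ring
        _ = γ^(i-r)
            * (An * Am * (poch (-(n:ℝ)) i * poch (-(m:ℝ)) j * (j.choose (i - r) : ℝ)
                * poch (a + (j:ℝ)) r)
              * ((i.factorial : ℝ) / (poch a i * i.factorial))
              * (poch a j * (j.factorial : ℝ)
                  / (poch a j * (j.factorial : ℝ) * (j.factorial : ℝ)))
              * (1 / (r.factorial : ℝ))) := by rw [e2]
        _ = An * Am * (poch (-(n:ℝ)) i * poch (-(m:ℝ)) j * (j.choose (i - r) : ℝ)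
            * poch (a + (j:ℝ)) r * γ ^ (i - r) / (poch a i * j.factorial * r.factorial)) := by
            have hpi := hpochine i
            have hpj := hpochine j
            field_simp
    have step1 : ∀ i ∈ range (n+1), ∀ j ∈ range (m+1),
        D i j * SV i j = An * Am * (∑ r ∈ range (i+1),
          poch (-(n:ℝ)) i * poch (-(m:ℝ)) j * (j.choose (i - r) : ℝ) * poch (a + (j:ℝ)) r
            * γ ^ (i - r) / (poch a i * j.factorial * r.factorial)) := by
      intro i _ j _
      rw [hSV]
      simp only
      rw [Finset.mul_sum, Finset.mul_sum]
      refine Finset.sum_congr rfl fun r hr => ?_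
      exact perr i j r (by simpa [Nat.lt_succ_iff] using hr)
    calc ∑ i ∈ range (n+1), ∑ j ∈ range (m+1), D i j * SV i j
        = ∑ i ∈ range (n+1), ∑ j ∈ range (m+1), An * Am * (∑ r ∈ range (i+1),
            poch (-(n:ℝ)) i * poch (-(m:ℝ)) j * (j.choose (i - r) : ℝ) * poch (a + (j:ℝ)) r
              * γ ^ (i - r) / (poch a i * j.factorial * r.factorial)) := by
          refine Finset.sum_congr rfl fun i hi => Finset.sum_congr rfl fun j hj => ?_
          exact step1 i hi j hj
      _ = An * Am * ∑ i ∈ range (n+1), ∑ j ∈ range (m+1), ∑ r ∈ range (i+1),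
            poch (-(n:ℝ)) i * poch (-(m:ℝ)) j * (j.choose (i - r) : ℝ) * poch (a + (j:ℝ)) r
              * γ ^ (i - r) / (poch a i * j.factorial * r.factorial) := by
          rw [Finset.mul_sum]
          refine Finset.sum_congr rfl fun i _ => ?_
          rw [Finset.mul_sum]
      _ = An * Am * (if n = m then (n.factorial : ℝ) * (γ + 1) ^ n / poch a n else 0) := by
          rw [finite_key a γ ha hmn]
      _ = if n = m then (1:ℝ) else 0 := by
          by_cases hnm : n = m
          · subst hnm
            rw [if_pos rfl, if_pos rfl]
            have hs1 : Real.sqrt (poch a n / n.factorial) * Real.sqrt (poch a n / n.factorial)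
                = poch a n / n.factorial := Real.mul_self_sqrt (by
                  have := (poch_pos ha n).le
                  positivity)
            have hs2 : Real.rpow β ((n:ℝ)/2) * Real.rpow β ((n:ℝ)/2) = β ^ n := by
              rw [show Real.rpow β ((n:ℝ)/2) = β ^ ((n:ℝ)/2) from rfl, ← Real.rpow_add hβ0,
                show (n:ℝ)/2 + (n:ℝ)/2 = ((n:ℕ):ℝ) from by ring, Real.rpow_natCast]
            have hγ1 : γ + 1 = 1/β := by rw [hγ_def]; field_simp; ring
            have hfn : (n.factorial : ℝ) ≠ 0 := Nat.cast_ne_zero.2 n.factorial_ne_zero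
            rw [hAn, hγ1]
            calc Real.sqrt (poch a n / n.factorial) * Real.rpow β ((n:ℝ)/2)
                  * (Real.sqrt (poch a n / n.factorial) * Real.rpow β ((n:ℝ)/2))
                  * ((n.factorial : ℝ) * (1/β) ^ n / poch a n)
                = (Real.sqrt (poch a n / n.factorial) * Real.sqrt (poch a n / n.factorial))
                  * (Real.rpow β ((n:ℝ)/2) * Real.rpow β ((n:ℝ)/2))
                  * ((n.factorial : ℝ) * (1/β) ^ n / poch a n) := by ring
              _ = (poch a n / n.factorial) * β ^ n
                  * ((n.factorial : ℝ) * (1/β) ^ n / poch a n) := by rw [hs1, hs2]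
              _ = (β * (1/β)) ^ n * ((poch a n / n.factorial)
                  * ((n.factorial : ℝ) / poch a n)) := by rw [mul_pow]; ring
              _ = 1 := by
                  rw [mul_one_div_cancel hβne, one_pow]
                  field_simp
                  exact div_self ((poch_pos ha n).ne')
          · rw [if_neg hnm, if_neg hnm, mul_zero]

/-- **orthonormality of Meixner polynomials.** For `μ > 0`,
`0 < β < 1`, and all integers `n, m ≥ 0`, the series
`∑ₖ (1−β)^{2μ} (2μ)ₖ (βᵏ/k!) Mₙ^μ(k;β) Mₘ^μ(k;β)` converges absolutely and its
sum equals `δₙₘ`. -/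
theorem meixner_orthonormal (μ β : ℝ) (hμ : 0 < μ) (hβ0 : 0 < β) (hβ1 : β < 1)
    (n m : ℕ) :
    Summable (fun k : ℕ =>
      |Real.rpow (1 - β) (2 * μ) * poch (2 * μ) k * (β ^ k / (Nat.factorial k)) *
        meixner μ β n k * meixner μ β m k|) ∧
    ∑' k : ℕ, Real.rpow (1 - β) (2 * μ) * poch (2 * μ) k *
        (β ^ k / (Nat.factorial k)) * meixner μ β n k * meixner μ β m k =
      if n = m then (1 : ℝ) else 0 := by
  rcases le_total m n with h | h
  · exact key μ β hμ hβ0 hβ1 n m h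
  · obtain ⟨hs, hv⟩ := key μ β hμ hβ0 hβ1 m n h
    have hfun : ∀ k : ℕ, Real.rpow (1 - β) (2 * μ) * poch (2 * μ) k *
          (β ^ k / (Nat.factorial k)) * meixner μ β n k * meixner μ β m k
        = Real.rpow (1 - β) (2 * μ) * poch (2 * μ) k *
          (β ^ k / (Nat.factorial k)) * meixner μ β m k * meixner μ β n k := fun k => by ring
    constructor
    · exact hs.congr fun k => congrArg abs (hfun k).symm
    · rw [tsum_congr hfun, hv]
      exact if_congr eq_comm rfl rfl
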